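/- Assume the carrier of the interpretation D for the constraints contains at least one element different from 0, and consider the programs P₀ = { p ← ¬r(X), r(X) ← X = 0 } and P₂ = { p ← ¬q, r(X) ← X = 0, q ← r(Y) }. Then p ∈ M(P₀) while p ∉ M(P₂). (P₂ is obtained by folding p ← ¬r(X) using q ← r(Y) with a substitution satisfying conditions (i) and (ii) of the positive folding rule but with FV(q) ≠ FV(r(X)), showing that a negative folding rule with the weaker variable conditions of positive folding would be incorrect.) -/

import Mathlib

namespace CLP

/-! ### The set `W` of countable ordinals -/

/-- `W` : the set of countable ordinals. -/
abbrev W : Type 1 := {o : Ordinal.{0} // o < (Cardinal.aleph 1).ord}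

theorem natW_lt (n : ℕ) : (n : Ordinal.{0}) < (Cardinal.aleph 1).ord := by
  refine Cardinal.lt_ord.mpr ?_
  simpa using (Cardinal.nat_lt_aleph0 n).trans Cardinal.aleph0_lt_aleph_one

/-- natural numbers as countable ordinals -/
def natW (n : ℕ) : W := ⟨n, natW_lt n⟩

/-- the zero ordinal as an element of `W` -/
def zeroW : W := natW 0

theorem succW_lt {o : Ordinal.{0}} (h : o < (Cardinal.aleph 1).ord) :
    o + 1 < (Cardinal.aleph 1).ord := by
  have hlim : Order.IsSuccLimit ((Cardinal.aleph 1).ord) :=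
    Cardinal.isSuccLimit_ord (Cardinal.aleph0_le_aleph 1)
  rw [← Order.succ_eq_add_one]
  exact hlim.succ_lt h

/-- the successor operation on countable ordinals (`σ(A) + 1`) -/
def succW (o : W) : W := ⟨o.1 + 1, succW_lt o.2⟩

/-! ### Syntax and semantics of constraint logic programs

Atoms, constraints, and clauses are represented semantically: an atom with variables
in `V` is a user-defined predicate symbol (from `Pu`) together with the function
mapping each valuation `v : V → D` to the tuple of values of its argument terms, and a
constraint is represented by its satisfaction predicate on valuations (the
interpretation `𝒟` for the constraints, with carrier `D`, is thereby fixed). -/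

/-- An atom: a user-defined predicate symbol together with its (semantically
represented) tuple of argument terms. -/
structure SAtm (V D Pu : Type) where
  pred : Pu
  args : (V → D) → List D

/-- Ground atoms: the base `B_𝒟` is `{p(d₁,…,dₙ) | p ∈ Pred_u, dᵢ ∈ D}`. -/
abbrev GrAtm (Pu D : Type) := Pu × List D

variable {V D Pu : Type}

/-- the ground atom `v(A)` obtained by applying the valuation `v` to the atom `A` -/
def SAtm.eval (A : SAtm V D Pu) (v : V → D) : GrAtm Pu D := (A.pred, A.args v)

/-- A clause `H ← c ∧ L₁ ∧ … ∧ Lₘ`: a head atom `H`, a constraint `c`, and a body,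
i.e. a list of literals; a literal is a pair of a sign (`true` = positive literal `A`,
`false` = negative literal `¬A`) and an atom. -/
structure SClause (V D Pu : Type) where
  head : SAtm V D Pu
  constr : (V → D) → Prop
  body : List (Bool × SAtm V D Pu)

/-- A constraint logic program: a set of clauses (finiteness is stated separately). -/
abbrev SProg (V D Pu : Type) := Set (SClause V D Pu)

/-- truth of a ground literal in a `D`-interpretation `I` -/
def litTrue (I : Set (GrAtm Pu D)) (l : Bool × GrAtm Pu D) : Prop :=
  if l.1 then l.2 ∈ I else l.2 ∉ I

/-- truth of the ground instance `v(γ)` of the clause `γ` in the `D`-interpretation `I` -/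
def SClause.groundTrue (γ : SClause V D Pu) (I : Set (GrAtm Pu D)) (v : V → D) : Prop :=
  γ.constr v → (∀ l ∈ γ.body, litTrue I (l.1, l.2.eval v)) → γ.head.eval v ∈ I

/-- `I` is a `D`-model of the program `P` -/
def isModel (I : Set (GrAtm Pu D)) (P : SProg V D Pu) : Prop :=
  ∀ γ ∈ P, ∀ v, γ.groundTrue I v

/-- the ground instance `v(γ)` of the clause `γ` is locally stratified w.r.t. `σ` -/
def SClause.locStrat (σ : GrAtm Pu D → W) (γ : SClause V D Pu) (v : V → D) : Prop :=
  γ.constr v → ∀ l ∈ γ.body,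
    (l.1 = true → σ (l.2.eval v) ≤ σ (γ.head.eval v)) ∧
    (l.1 = false → σ (l.2.eval v) < σ (γ.head.eval v))

/-- `P` is locally stratified w.r.t. the local stratification `σ : B_𝒟 → W` -/
def locStratWrt (σ : GrAtm Pu D → W) (P : SProg V D Pu) : Prop :=
  ∀ γ ∈ P, ∀ v, γ.locStrat σ v

/-- `P` is locally stratified -/
def LocallyStratified (P : SProg V D Pu) : Prop := ∃ σ, locStratWrt σ P

/-- `I ≺ J` : `I` is preferable to `J` w.r.t. the local stratification `σ` -/
def pref (σ : GrAtm Pu D → W) (I J : Set (GrAtm Pu D)) : Prop :=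
  ∀ A₁ ∈ I \ J, ∃ A₂ ∈ J \ I, σ A₂ < σ A₁

/-- `M` is a perfect model of `P` w.r.t. the local stratification `σ`:
a `D`-model preferable to every other `D`-model of `P` -/
def PerfectModelWrt (σ : GrAtm Pu D → W) (P : SProg V D Pu) (M : Set (GrAtm Pu D)) : Prop :=
  isModel M P ∧ ∀ N, isModel N P → N ≠ M → pref σ M N

/-- `M` is a perfect model of `P` (w.r.t. some local stratification for `P`) -/
def IsPerfectModel (P : SProg V D Pu) (M : Set (GrAtm Pu D)) : Prop :=
  ∃ σ, locStratWrt σ P ∧ PerfectModelWrt σ P M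

/-! ### Predicate dependencies -/

/-- the predicate `p` immediately depends on the predicate `q` in `P` -/
def immDep (P : SProg V D Pu) (p q : Pu) : Prop :=
  ∃ γ ∈ P, γ.head.pred = p ∧ ∃ l ∈ γ.body, (l.2).pred = q

/-- the predicate `p` depends on the predicate `q` in `P` -/
def dependsOn (P : SProg V D Pu) : Pu → Pu → Prop := Relation.TransGen (immDep P)

/-- `Def(p, P)` : the definition of the predicate `p` in `P` -/
def DefOf (p : Pu) (P : SProg V D Pu) : SProg V D Pu := {γ ∈ P | γ.head.pred = p}

/-! ### Proof trees -/

/-- Finite trees whose internal nodes are ground atoms; the children of a node are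
either subtrees (corresponding to positive literals) or leaves labelled by a ground
atom `B` (corresponding to negative literals `¬B`). A node with the empty list of
children is a node whose unique child is the empty conjunction `true`. -/
inductive PT (Pu D : Type) : Type where
  | node (A : GrAtm Pu D) (children : List (PT Pu D ⊕ GrAtm Pu D)) : PT Pu D

/-- the ground atom at the root of a tree -/
def PT.root : PT Pu D → GrAtm Pu D
  | .node A _ => A

/-- the ground literal corresponding to a child of a node of a tree -/
def childLit : PT Pu D ⊕ GrAtm Pu D → Bool × GrAtm Pu D
  | .inl t => (true, t.root)
  | .inr B => (false, B)

/-- Validity of a tree w.r.t. a program `P` and an "oracle" `O` for the negative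
leaves: each node `A` with children `L₁,…,Lᵣ` must be obtained from a ground instance
`A ← c ∧ L₁ ∧ … ∧ Lᵣ` (with `𝒟 ⊨ c`) of a clause of `P`, and every negative leaf
`¬B` must satisfy `O B`. -/
inductive PT.ValidW (P : SProg V D Pu) (O : GrAtm Pu D → Prop) : PT Pu D → Prop where
  | node {A : GrAtm Pu D} {cs : List (PT Pu D ⊕ GrAtm Pu D)}
      (hc : ∃ γ ∈ P, ∃ v, γ.constr v ∧ γ.head.eval v = A ∧
        γ.body.map (fun l => (l.1, l.2.eval v)) = cs.map childLit)
      (hpos : ∀ t, Sum.inl t ∈ cs → PT.ValidW P O t)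
      (hneg : ∀ B, Sum.inr B ∈ cs → O B) :
      PT.ValidW P O (.node A cs)

/-- `HasPTAux σ P α A` holds iff there is a proof tree for `A` and `P`, where a
negative leaf `¬B` is allowed only if there is no proof tree for `B` and `P` among
the proof trees for ground atoms of stratum `< α`. -/
def HasPTAux (σ : GrAtm Pu D → W) (P : SProg V D Pu) (α : W) (A : GrAtm Pu D) : Prop :=
  ∃ T : PT Pu D, T.root = A ∧
    PT.ValidW P (fun B => ∀ _hlt : σ B < α, ¬ HasPTAux σ P (σ B) B) T
termination_by α.1
decreasing_by exact _hlt

/-- there exists a proof tree for the ground atom `A` and the program `P` -/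
def HasProofTree (σ : GrAtm Pu D → W) (P : SProg V D Pu) (A : GrAtm Pu D) : Prop :=
  HasPTAux σ P (σ A) A

/-- `T` is a proof tree for the ground atom `A` and the program `P` -/
def IsProofTree (σ : GrAtm Pu D → W) (P : SProg V D Pu) (A : GrAtm Pu D) (T : PT Pu D) : Prop :=
  T.root = A ∧
    PT.ValidW P (fun B => ∀ _hlt : σ B < σ A, ¬ HasPTAux σ P (σ B) B) T

/-! ### The measure `μ` -/

mutual
  /-- `size(T)` : the number of atoms occurring at non-leaf nodes of `T` -/
  inductive PT.HasSize : PT Pu D → ℕ → Prop where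
    | node {A cs n} : ChildrenSize cs n → PT.HasSize (.node A cs) (1 + n)
  /-- total size of the subtrees among a list of children -/
  inductive ChildrenSize : List (PT Pu D ⊕ GrAtm Pu D) → ℕ → Prop where
    | nil : ChildrenSize [] 0
    | inl {t cs n m} : PT.HasSize t n → ChildrenSize cs m →
        ChildrenSize (Sum.inl t :: cs) (n + m)
    | inr {B cs m} : ChildrenSize cs m → ChildrenSize (Sum.inr B :: cs) m
end

/-- the (non-strict) lexicographic ordering `≤_lex` on `W × ℕ` -/
def wnLE (a b : W × ℕ) : Prop := a.1 < b.1 ∨ (a.1 = b.1 ∧ a.2 ≤ b.2)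

/-- the strict lexicographic ordering `<_lex` on `W × ℕ` -/
def wnLT (a b : W × ℕ) : Prop := a.1 < b.1 ∨ (a.1 = b.1 ∧ a.2 < b.2)

/-- `⟨α₁,m₁⟩ ⊕ ⟨α₂,m₂⟩ = ⟨max(α₁,α₂), m₁+m₂⟩` -/
noncomputable def oplus (a b : W × ℕ) : W × ℕ := (max a.1 b.1, a.2 + b.2)

/-- `μ(A,P) = min_lex {⟨σ(A), size(T)⟩ | T is a proof tree for A and P}`:
`muAtomIs σ P A m` states that `μ(A,P)` is defined and equal to `m`. -/
def muAtomIs (σ : GrAtm Pu D → W) (P : SProg V D Pu) (A : GrAtm Pu D) (m : W × ℕ) : Prop :=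
  (∃ (T : PT Pu D) (sz : ℕ), IsProofTree σ P A T ∧ T.HasSize sz ∧ m = (σ A, sz)) ∧
  (∀ (T : PT Pu D) (sz : ℕ), IsProofTree σ P A T → T.HasSize sz → wnLE m (σ A, sz))

/-- `μ` on ground literals: `μ(A,P)` for an atom, `⟨σ(A),0⟩` for a negated atom `¬A` -/
def muLitIs (σ : GrAtm Pu D → W) (P : SProg V D Pu) :
    Bool × GrAtm Pu D → W × ℕ → Prop
  | (true, A), m => muAtomIs σ P A m
  | (false, A), m => m = (σ A, 0)

/-- `μ(L₁ ∧ … ∧ Lₙ, P) = μ(L₁,P) ⊕ … ⊕ μ(Lₙ,P)` -/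
inductive muGoalIs (σ : GrAtm Pu D → W) (P : SProg V D Pu) :
    List (Bool × GrAtm Pu D) → W × ℕ → Prop where
  | nil : muGoalIs σ P [] (zeroW, 0)
  | cons {l G m mg} : muLitIs σ P l m → muGoalIs σ P G mg →
      muGoalIs σ P (l :: G) (oplus m mg)

end CLP

namespace Stmt14

open CLP

/-- the user-defined predicate symbols `p`, `q` and `r` -/
inductive Pd where
  | p | q | r
deriving DecidableEq

variable (D : Type) (z : D)

/-- the atom `p` (0-ary) -/
def atomP : SAtm Unit D Pd := ⟨Pd.p, fun _ => []⟩
/-- the atom `q` (0-ary) -/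
def atomQ : SAtm Unit D Pd := ⟨Pd.q, fun _ => []⟩
/-- the atom `r(X)` (also used for `r(Y)`: the choice of the variable name is
immaterial in the semantic representation of atoms) -/
def atomRX : SAtm Unit D Pd := ⟨Pd.r, fun v => [v ()]⟩

/-- `P₀ = { p ← ¬r(X),  r(X) ← X = 0 }` (`z` plays the role of `0`) -/
def P0 : SProg Unit D Pd :=
  { ⟨atomP D, fun _ => True, [(false, atomRX D)]⟩,
    ⟨atomRX D, fun v => v () = z, []⟩ }

/-- `P₂ = { p ← ¬q,  r(X) ← X = 0,  q ← r(Y) }` -/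
def P2 : SProg Unit D Pd :=
  { ⟨atomP D, fun _ => True, [(false, atomQ D)]⟩,
    ⟨atomRX D, fun v => v () = z, []⟩,
    ⟨atomQ D, fun _ => True, [(true, atomRX D)]⟩ }

/-- the stratification: `σ(r(d)) = 0`, `σ(q) = 1`, `σ(p) = 2` -/
def σ0 : GrAtm Pd D → W := fun A =>
  match A.1 with
  | Pd.r => natW 0
  | Pd.q => natW 1
  | Pd.p => natW 2

lemma natW_lt_natW {a b : ℕ} (h : a < b) : natW a < natW b := by
  simp only [natW, Subtype.mk_lt_mk]
  exact_mod_cast h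

lemma natW_le_natW {a b : ℕ} (h : a ≤ b) : natW a ≤ natW b := by
  simp only [natW, Subtype.mk_le_mk]
  exact_mod_cast h

/-- `M₀ = { p, r(0) }` -/
def M0 : Set (GrAtm Pd D) := {(Pd.p, []), (Pd.r, [z])}

/-- `M₂ = { q, r(0) }` -/
def M2 : Set (GrAtm Pd D) := {(Pd.q, []), (Pd.r, [z])}

variable {D z}

lemma strat_P0 : locStratWrt (σ0 D) (P0 D z) := by
  intro γ hγ v
  rcases hγ with rfl | rfl <;> intro _ l hl
  · simp only [List.mem_singleton] at hl
    subst hl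
    exact ⟨fun h => by simp at h, fun _ => natW_lt_natW (by norm_num)⟩
  · simp at hl

lemma strat_P2 : locStratWrt (σ0 D) (P2 D z) := by
  intro γ hγ v
  rcases hγ with rfl | rfl | rfl <;> intro _ l hl
  · simp only [List.mem_singleton] at hl
    subst hl
    exact ⟨fun h => by simp at h, fun _ => natW_lt_natW (by norm_num)⟩
  · simp at hl
  · simp only [List.mem_singleton] at hl
    subst hl
    exact ⟨fun _ => natW_le_natW (by norm_num), fun h => by simp at h⟩

lemma rz_mem_of_model_P0 {N : Set (GrAtm Pd D)} (hN : isModel N (P0 D z)) :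
    (Pd.r, [z]) ∈ N := by
  have := hN _ (Or.inr rfl) (fun _ => z) rfl (by simp)
  simpa [SAtm.eval, atomRX] using this

lemma r_all_of_model_P0 {N : Set (GrAtm Pd D)} (hN : isModel N (P0 D z))
    (hp : (Pd.p, ([] : List D)) ∉ N) (d : D) : (Pd.r, [d]) ∈ N := by
  by_contra hr
  have := hN _ (Or.inl rfl) (fun _ => d) trivial (by
    intro l hl
    simp only [List.mem_singleton] at hl
    subst hl
    simpa [litTrue, SAtm.eval, atomRX] using hr)
  exact hp (by simpa [SAtm.eval, atomP] using this)

lemma model_M0 : isModel (M0 D z) (P0 D z) := by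
  intro γ hγ v
  rcases hγ with rfl | rfl <;> intro hc _
  · exact Or.inl rfl
  · right
    simp [SAtm.eval, atomRX, hc]
    exact hc

lemma rz_mem_of_model_P2 {N : Set (GrAtm Pd D)} (hN : isModel N (P2 D z)) :
    (Pd.r, [z]) ∈ N := by
  have := hN _ (Or.inr (Or.inl rfl)) (fun _ => z) rfl (by simp)
  simpa [SAtm.eval, atomRX] using this

lemma q_mem_of_model_P2 {N : Set (GrAtm Pd D)} (hN : isModel N (P2 D z)) :
    (Pd.q, ([] : List D)) ∈ N := by
  have := hN _ (Or.inr (Or.inr rfl)) (fun _ => z) trivial (by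
    intro l hl
    simp only [List.mem_singleton] at hl
    subst hl
    simpa [litTrue, SAtm.eval, atomRX] using rz_mem_of_model_P2 hN)
  simpa [SAtm.eval, atomQ] using this

lemma model_M2 : isModel (M2 D z) (P2 D z) := by
  intro γ hγ v
  rcases hγ with rfl | rfl | rfl <;> intro hc hb
  · exfalso
    have := hb (false, atomQ D) (List.mem_singleton_self _)
    simp only [litTrue, SAtm.eval, atomQ] at this
    exact this (Or.inl rfl)
  · right
    simp [SAtm.eval, atomRX, hc]
    exact hc
  · exact Or.inl rfl

lemma perfect_M0 (hD : ∃ d : D, d ≠ z) :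
    PerfectModelWrt (σ0 D) (P0 D z) (M0 D z) := by
  refine ⟨model_M0, ?_⟩
  intro N hN hne A₁ hA₁
  obtain ⟨hA₁M, hA₁N⟩ := hA₁
  have hrz : (Pd.r, [z]) ∈ N := rz_mem_of_model_P0 hN
  rcases hA₁M with rfl | rfl
  · -- A₁ = p, so p ∉ N
    obtain ⟨d, hd⟩ := hD
    refine ⟨(Pd.r, [d]), ⟨r_all_of_model_P0 hN hA₁N d, ?_⟩, natW_lt_natW (by norm_num)⟩
    simp [M0, hd]
  · exact absurd hrz hA₁N

lemma perfect_M2 : PerfectModelWrt (σ0 D) (P2 D z) (M2 D z) := by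
  refine ⟨model_M2, ?_⟩
  intro N hN hne A₁ hA₁
  obtain ⟨hA₁M, hA₁N⟩ := hA₁
  rcases hA₁M with rfl | rfl
  · exact absurd (q_mem_of_model_P2 hN) hA₁N
  · exact absurd (rz_mem_of_model_P2 hN) hA₁N

/-- If the carrier `D` contains at least one element different
from `0`, then `P₀` and `P₂` have perfect models, `p ∈ M(P₀)` and `p ∉ M(P₂)`
(so the folding step leading from `P₀` to `P₂`, performed with the weaker variable
conditions of the positive folding rule, is incorrect). -/
theorem p_in_M_P0_not_in_M_P2 (hD : ∃ d : D, d ≠ z) :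
    (∃ M, IsPerfectModel (P0 D z) M) ∧ (∃ M, IsPerfectModel (P2 D z) M) ∧
    (∀ M, IsPerfectModel (P0 D z) M → ((Pd.p, []) : GrAtm Pd D) ∈ M) ∧
    (∀ M, IsPerfectModel (P2 D z) M → ((Pd.p, []) : GrAtm Pd D) ∉ M) := by
  refine ⟨⟨M0 D z, σ0 D, strat_P0, perfect_M0 hD⟩,
    ⟨M2 D z, σ0 D, strat_P2, perfect_M2⟩, ?_, ?_⟩
  · rintro M ⟨σ', hstrat, hM, hpref⟩
    by_contra hp
    obtain ⟨d, hd⟩ := hD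
    have hrd : (Pd.r, [d]) ∈ M := r_all_of_model_P0 hM hp d
    have hne : M0 D z ≠ M := by
      intro h
      exact hp (h ▸ Or.inl rfl)
    have hprefM := hpref (M0 D z) model_M0 hne (Pd.r, [d])
      ⟨hrd, by simp [M0, hd]⟩
    obtain ⟨A₂, ⟨hA₂M0, hA₂M⟩, hlt⟩ := hprefM
    have hA₂ : A₂ = (Pd.p, []) := by
      rcases hA₂M0 with rfl | rfl
      · rfl
      · exact absurd (rz_mem_of_model_P0 hM) hA₂M
    subst hA₂
    -- local stratification of `p ← ¬r(d)` forces `σ'(r(d)) < σ'(p)`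
    have := (hstrat _ (Or.inl rfl) (fun _ => d) trivial (false, atomRX D)
      (List.mem_singleton_self _)).2 rfl
    simp only [SAtm.eval, atomRX, atomP] at this
    exact absurd hlt (not_lt.mpr this.le)
  · rintro M ⟨σ', hstrat, hM, hpref⟩ hp
    have hne : M2 D z ≠ M := by
      intro h
      exact (show ((Pd.p, []) : GrAtm Pd D) ∉ M2 D z by simp [M2]) (h ▸ hp)
    obtain ⟨A₂, ⟨hA₂M2, hA₂M⟩, _⟩ :=
      hpref (M2 D z) model_M2 hne (Pd.p, []) ⟨hp, by simp [M2]⟩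
    rcases hA₂M2 with rfl | rfl
    · exact hA₂M (q_mem_of_model_P2 hM)
    · exact hA₂M (rz_mem_of_model_P2 hM)

end Stmt14
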